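/- Fix constants a > 0, b > 0 and a parameter ρ > 0, and let μ be any probability measure on ℂ. Then the MVU filter averaged zeroth-order error probability is strictly smaller than that of the MMSE filter: ∫ P0(f_MVU, h) dμ(h) < ∫ P0(f_MMSE, h) dμ(h), where f_MVU = x/‖x‖² and f_MMSE = ρ·x/(ρ‖x‖² + σw²). In particular the MMSE estimator is not optimal for minimizing the average [P_e]_0 (Proposition 8). -/

import Mathlib

open MeasureTheory

/-- `φ(f) = fᴴ x = Σᵢ conj(fᵢ)·xᵢ`. -/
noncomputable def phi {B : ℕ} (x f : Fin B → ℂ) : ℂ :=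
  ∑ i, (starRingEnd ℂ) (f i) * x i

/-- Squared Euclidean norm `‖f‖² = Σᵢ |fᵢ|²`. -/
noncomputable def nsq {B : ℕ} (f : Fin B → ℂ) : ℝ :=
  ∑ i, Complex.normSq (f i)


lemma nsq_pos {B : ℕ} {x : Fin B → ℂ} (hx : x ≠ 0) : 0 < nsq x := by
  obtain ⟨i, hi⟩ : ∃ i, x i ≠ 0 := by
    by_contra hc; push_neg at hc; exact hx (funext hc)
  exact Finset.sum_pos' (fun j _ => Complex.normSq_nonneg (x j))
    ⟨i, Finset.mem_univ i, Complex.normSq_pos.mpr hi⟩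

lemma phi_smul {B : ℕ} (x : Fin B → ℂ) (c : ℝ) :
    phi x (fun i => (c : ℂ) * x i) = ((c * nsq x : ℝ) : ℂ) := by
  unfold phi nsq
  push_cast
  rw [Finset.mul_sum]
  refine Finset.sum_congr rfl fun i _ => ?_
  rw [map_mul, Complex.conj_ofReal, mul_assoc, Complex.normSq_eq_conj_mul_self]

lemma nsq_smul {B : ℕ} (x : Fin B → ℂ) (c : ℝ) :
    nsq (fun i => (c : ℂ) * x i) = c ^ 2 * nsq x := by
  unfold nsq
  rw [Finset.mul_sum]
  refine Finset.sum_congr rfl fun i _ => ?_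
  rw [Complex.normSq_mul, Complex.normSq_ofReal]
  ring

/-- Zeroth-order symbol-estimate MSE of the ZF equalizer for channel `h`. -/
noncomputable def Mdc {B : ℕ} (σx2 σw2 : ℝ) (h : ℂ) (x f : Fin B → ℂ) : ℝ :=
  (σx2 * (Complex.normSq h * Complex.normSq (phi x f - 1) + σw2 * nsq f) + σw2) /
    (Complex.normSq h * Complex.normSq (phi x f) + σw2 * nsq f)


lemma Mdc_smul {B : ℕ} (σx2 σw2 : ℝ) (h : ℂ) (x : Fin B → ℂ) (c : ℝ) :
    Mdc σx2 σw2 h x (fun i => (c : ℂ) * x i) =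
      (σx2 * (Complex.normSq h * (c * nsq x - 1) ^ 2 + σw2 * (c ^ 2 * nsq x)) + σw2) /
        (Complex.normSq h * (c * nsq x) ^ 2 + σw2 * (c ^ 2 * nsq x)) := by
  unfold Mdc
  rw [phi_smul, nsq_smul]
  have h1 : ((c * nsq x : ℝ) : ℂ) - 1 = ((c * nsq x - 1 : ℝ) : ℂ) := by push_cast; ring
  rw [h1, Complex.normSq_ofReal, Complex.normSq_ofReal]
  ring

/-- Standard Gaussian tail function `Q(u) = (1/√(2π)) ∫_u^∞ e^{−t²/2} dt`. -/
noncomputable def Qfun (u : ℝ) : ℝ :=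
  (Real.sqrt (2 * Real.pi))⁻¹ * ∫ t in Set.Ioi u, Real.exp (-t ^ 2 / 2)


lemma gauss_integrable : Integrable (fun t : ℝ => Real.exp (-t ^ 2 / 2)) := by
  have h := integrable_exp_neg_mul_sq (b := (1:ℝ)/2) (by norm_num)
  have he : (fun t : ℝ => Real.exp (-t ^ 2 / 2)) = fun t : ℝ => Real.exp (-(1/2) * t ^ 2) := by
    funext t; congr 1; ring
  rw [he]; exact h

lemma Qfun_strictAnti : StrictAnti Qfun := by
  intro u v huv
  unfold Qfun
  have hc : 0 < (Real.sqrt (2 * Real.pi))⁻¹ := by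
    have : 0 < Real.pi := Real.pi_pos
    positivity
  refine mul_lt_mul_of_pos_left ?_ hc
  have hsplit : Set.Ioi u = Set.Ioc u v ∪ Set.Ioi v := (Set.Ioc_union_Ioi_eq_Ioi huv.le).symm
  rw [hsplit, setIntegral_union (Set.Ioc_disjoint_Ioi le_rfl) measurableSet_Ioi
    gauss_integrable.integrableOn gauss_integrable.integrableOn]
  have hpos : 0 < ∫ t in Set.Ioc u v, Real.exp (-t ^ 2 / 2) := by
    rw [setIntegral_pos_iff_support_of_nonneg_ae
      (Filter.Eventually.of_forall fun t => (Real.exp_pos _).le) gauss_integrable.integrableOn]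
    have hsup : (Function.support fun t : ℝ => Real.exp (-t ^ 2 / 2)) = Set.univ := by
      ext t; simp [Function.support, Real.exp_ne_zero]
    rw [hsup, Set.univ_inter]
    simp [Real.volume_Ioc, huv]
  linarith

lemma Qfun_nonneg (u : ℝ) : 0 ≤ Qfun u := by
  unfold Qfun
  have hc : 0 ≤ (Real.sqrt (2 * Real.pi))⁻¹ := by positivity
  exact mul_nonneg hc (setIntegral_nonneg measurableSet_Ioi
    fun t _ => (Real.exp_pos _).le)

lemma Qfun_le (u : ℝ) :
    Qfun u ≤ (Real.sqrt (2 * Real.pi))⁻¹ * ∫ t, Real.exp (-t ^ 2 / 2) := by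
  unfold Qfun
  have hc : 0 ≤ (Real.sqrt (2 * Real.pi))⁻¹ := by positivity
  exact mul_le_mul_of_nonneg_left (setIntegral_le_integral gauss_integrable
    (Filter.Eventually.of_forall fun t => (Real.exp_pos _).le)) hc

lemma Qfun_measurable : Measurable Qfun :=
  Qfun_strictAnti.antitone.measurable

/-- Zeroth-order error probability `[P_e]₀ = a·Q(b·√(σx²/M_dc(f, h)))`. -/
noncomputable def P0dc {B : ℕ} (a b σx2 σw2 : ℝ) (h : ℂ) (x f : Fin B → ℂ) : ℝ :=
  a * Qfun (b * Real.sqrt (σx2 / Mdc σx2 σw2 h x f))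


lemma P0dc_measurable {B : ℕ} (a b σx2 σw2 : ℝ) (x f : Fin B → ℂ) :
    Measurable fun h : ℂ => P0dc a b σx2 σw2 h x f := by
  unfold P0dc Mdc
  have hns : Measurable fun h : ℂ => Complex.normSq h := Complex.continuous_normSq.measurable
  apply Measurable.const_mul
  apply Qfun_measurable.comp
  apply Measurable.const_mul
  apply Measurable.sqrt
  apply Measurable.const_div
  exact Measurable.div
    ((((hns.mul measurable_const).add measurable_const).const_mul σx2).add measurable_const)
    ((hns.mul measurable_const).add measurable_const)

lemma P0dc_integrable {B : ℕ} (a b σx2 σw2 : ℝ) (ha : 0 < a) (x f : Fin B → ℂ)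
    (μ : Measure ℂ) [IsProbabilityMeasure μ] :
    Integrable (fun h : ℂ => P0dc a b σx2 σw2 h x f) μ := by
  refine ⟨(P0dc_measurable a b σx2 σw2 x f).aestronglyMeasurable,
    HasFiniteIntegral.of_bounded (C := a * ((Real.sqrt (2 * Real.pi))⁻¹ * ∫ t, Real.exp (-t ^ 2 / 2))) (ae_of_all _ fun h => ?_)⟩
  rw [Real.norm_eq_abs, P0dc, abs_of_nonneg (mul_nonneg ha.le (Qfun_nonneg _))]
  exact mul_le_mul_of_nonneg_left (Qfun_le _) ha.le

/-- The MVU channel-estimating filter `f_MVU = x / ‖x‖²`. -/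
noncomputable def fMVU {B : ℕ} (x : Fin B → ℂ) : Fin B → ℂ :=
  fun i => x i / (nsq x : ℂ)

/-- The MMSE channel-estimating filter `f_MMSE = ρ·x / (ρ‖x‖² + σw²)`. -/
noncomputable def fMMSE {B : ℕ} (σw2 ρ : ℝ) (x : Fin B → ℂ) : Fin B → ℂ :=
  fun i => (ρ : ℂ) * x i / ((ρ * nsq x + σw2 : ℝ) : ℂ)


lemma fMVU_eq {B : ℕ} (x : Fin B → ℂ) :
    fMVU x = fun i => (((nsq x)⁻¹ : ℝ) : ℂ) * x i := by
  funext i; simp [fMVU, div_eq_mul_inv, mul_comm]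

lemma fMMSE_eq {B : ℕ} (σw2 ρ : ℝ) (x : Fin B → ℂ) :
    fMMSE σw2 ρ x = fun i => ((ρ / (ρ * nsq x + σw2) : ℝ) : ℂ) * x i := by
  funext i; push_cast [fMMSE, div_eq_mul_inv]; ring

lemma Mdc_fMVU {B : ℕ} (σx2 σw2 : ℝ) (h : ℂ) (x : Fin B → ℂ)
    (hX : 0 < nsq x) (hs : 0 < σw2) :
    Mdc σx2 σw2 h x (fMVU x) =
      σw2 * (σx2 + nsq x) / (Complex.normSq h * nsq x + σw2) := by
  set X := nsq x with hXdef
  set r := Complex.normSq h with hrdef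
  have hr : 0 ≤ r := Complex.normSq_nonneg h
  rw [fMVU_eq, Mdc_smul]
  rw [← hXdef, ← hrdef]
  rw [div_eq_div_iff (by positivity) (by positivity)]
  field_simp
  ring

lemma Mdc_fMMSE {B : ℕ} (σx2 σw2 ρ : ℝ) (h : ℂ) (x : Fin B → ℂ)
    (hX : 0 < nsq x) (hs : 0 < σw2) (hρ : 0 < ρ) :
    Mdc σx2 σw2 h x (fMMSE σw2 ρ x) =
      σw2 * (σx2 * (Complex.normSq h * σw2 + ρ ^ 2 * nsq x) + (ρ * nsq x + σw2) ^ 2) /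
        (ρ ^ 2 * nsq x * (Complex.normSq h * nsq x + σw2)) := by
  set X := nsq x with hXdef
  set r := Complex.normSq h with hrdef
  have hr : 0 ≤ r := Complex.normSq_nonneg h
  have hD : 0 < ρ * X + σw2 := by positivity
  rw [fMMSE_eq, Mdc_smul]
  rw [← hXdef, ← hrdef]
  rw [div_eq_div_iff ?_ (by positivity)]
  · field_simp
    ring
  · have h1 : 0 < σw2 * ((ρ / (ρ * X + σw2)) ^ 2 * X) := by positivity
    nlinarith [mul_nonneg hr (sq_nonneg (ρ / (ρ * X + σw2) * X))]

lemma Mdc_lt {B : ℕ} (σx2 σw2 ρ : ℝ) (h : ℂ) (x : Fin B → ℂ)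
    (hX : 0 < nsq x) (hσx : 0 < σx2) (hs : 0 < σw2) (hρ : 0 < ρ) :
    Mdc σx2 σw2 h x (fMVU x) < Mdc σx2 σw2 h x (fMMSE σw2 ρ x) := by
  rw [Mdc_fMVU σx2 σw2 h x hX hs, Mdc_fMMSE σx2 σw2 ρ h x hX hs hρ]
  set X := nsq x with hXdef
  set r := Complex.normSq h with hrdef
  have hr : 0 ≤ r := Complex.normSq_nonneg h
  rw [div_lt_div_iff₀ (by positivity) (by positivity)]
  have key : ρ ^ 2 * X * (σx2 + X) < σx2 * (r * σw2 + ρ ^ 2 * X) + (ρ * X + σw2) ^ 2 := by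
    nlinarith [mul_nonneg (mul_nonneg hσx.le hr) hs.le, mul_pos (mul_pos hρ hX) hs,
      mul_pos hs hs]
  have hpos : (0:ℝ) < σw2 * (r * X + σw2) := by positivity
  have := mul_lt_mul_of_pos_left key hpos
  nlinarith [this]

lemma P0dc_lt {B : ℕ} (a b σx2 σw2 ρ : ℝ) (h : ℂ) (x : Fin B → ℂ)
    (hX : 0 < nsq x) (hσx : 0 < σx2) (hs : 0 < σw2)
    (ha : 0 < a) (hb : 0 < b) (hρ : 0 < ρ) :
    P0dc a b σx2 σw2 h x (fMVU x) < P0dc a b σx2 σw2 h x (fMMSE σw2 ρ x) := by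
  have hM1 : 0 < Mdc σx2 σw2 h x (fMVU x) := by
    rw [Mdc_fMVU σx2 σw2 h x hX hs]
    have hr : 0 ≤ Complex.normSq h := Complex.normSq_nonneg h
    positivity
  have hlt := Mdc_lt σx2 σw2 ρ h x hX hσx hs hρ
  have hM2 : 0 < Mdc σx2 σw2 h x (fMMSE σw2 ρ x) := lt_trans hM1 hlt
  have hdiv : σx2 / Mdc σx2 σw2 h x (fMMSE σw2 ρ x) < σx2 / Mdc σx2 σw2 h x (fMVU x) :=
    div_lt_div_of_pos_left hσx hM1 hlt
  have hsqrt : Real.sqrt (σx2 / Mdc σx2 σw2 h x (fMMSE σw2 ρ x)) <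
      Real.sqrt (σx2 / Mdc σx2 σw2 h x (fMVU x)) :=
    Real.sqrt_lt_sqrt (by positivity) hdiv
  have harg := mul_lt_mul_of_pos_left hsqrt hb
  exact mul_lt_mul_of_pos_left (Qfun_strictAnti harg) ha

/-- Proposition 8: the MVU filter's averaged zeroth-order error probability is
strictly smaller than that of the MMSE filter, so the MMSE estimator is not
optimal for minimizing the average `[P_e]₀`. -/
theorem mvu_average_pe_strictly_smaller_than_mmse
    (B : ℕ) (hB : 1 ≤ B) (x : Fin B → ℂ) (hx : x ≠ 0)
    (σx2 σw2 : ℝ) (hσx : 0 < σx2) (hσw : 0 < σw2)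
    (a b : ℝ) (ha : 0 < a) (hb : 0 < b) (ρ : ℝ) (hρ : 0 < ρ)
    (μ : Measure ℂ) [IsProbabilityMeasure μ] :
    (∫ h, P0dc a b σx2 σw2 h x (fMVU x) ∂μ) <
      ∫ h, P0dc a b σx2 σw2 h x (fMMSE σw2 ρ x) ∂μ := by
  have hX : 0 < nsq x := nsq_pos hx
  have hF := P0dc_integrable a b σx2 σw2 ha x (fMVU x) μ
  have hG := P0dc_integrable a b σx2 σw2 ha x (fMMSE σw2 ρ x) μ
  have hsub : 0 < ∫ h, (P0dc a b σx2 σw2 h x (fMMSE σw2 ρ x)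
      - P0dc a b σx2 σw2 h x (fMVU x)) ∂μ := by
    rw [integral_pos_iff_support_of_nonneg_ae
      (ae_of_all _ fun h => sub_nonneg.mpr
        (P0dc_lt a b σx2 σw2 ρ h x hX hσx hσw ha hb hρ).le) (hG.sub hF)]
    have hsup : (Function.support fun h : ℂ => P0dc a b σx2 σw2 h x (fMMSE σw2 ρ x)
        - P0dc a b σx2 σw2 h x (fMVU x)) = Set.univ := by
      ext h
      simp only [Function.mem_support, Set.mem_univ, iff_true]
      exact ne_of_gt (sub_pos.mpr (P0dc_lt a b σx2 σw2 ρ h x hX hσx hσw ha hb hρ))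
    rw [hsup]
    simp
  rw [integral_sub hG hF] at hsub
  linarith
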